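/- Fix dimensions n, N, p, m₁, m₂ ≥ 1 and a point x ∈ ℝⁿ. Let ỹ : ℝⁿ → ℝᴺ and V : ℝⁿ → ℝ be differentiable at x and h₀ : ℝᴺ → ℝ be differentiable at ỹ(x). Let f ∈ ℝⁿ, g₁ ∈ ℝ^{n×m₁}, g₂ ∈ ℝ^{n×m₂}, A ∈ ℝ^{N×N}, B ∈ ℝ^{N×p}, a ∈ ℝᵖ, k̂ ∈ ℝᵖ, and G ∈ ℝ^{p×m₁} with GᵀG invertible; set G† := (GᵀG)⁻¹Gᵀ, k₁ := G†(k̂ − a), and e := a + G k₁ − k̂ ∈ ℝᵖ. Let γ, ε, β, λ, μ > 0 satisfy λ ≥ γ + εμ/(4β). Assume: (i) for all u₁ ∈ ℝ^{m₁} and u₂ ∈ ℝ^{m₂}, Dỹ(x)(f + g₁u₁ + g₂u₂) = A·ỹ(x) + B·(a + G u₁); (ii) Dh₀(ỹ(x))(A·ỹ(x) + B·k̂) > −γ·h₀(ỹ(x)) + (1/ε)·‖w‖², where w ∈ ℝᵖ is the vector whose j-th component is Dh₀(ỹ(x)) applied to the j-th column of B; (iii) V(x) ≥ β‖e‖²;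 (iv) there exists u₂ ∈ ℝ^{m₂} with DV(x)(f + g₁k₁ + g₂u₂) ≤ −λ·V(x). Then there exist u₁ ∈ ℝ^{m₁} and u₂ ∈ ℝ^{m₂} such that D(h₀∘ỹ)(x)(f + g₁u₁ + g₂u₂) − (1/μ)·DV(x)(f + g₁u₁ + g₂u₂) > −γ·(h₀(ỹ(x)) − V(x)/μ). -/

import Mathlib

open Matrix

set_option maxHeartbeats 1000000 in
/-- pointwise form of Theorem 1: the dual-relative-degree CBF
`h(x) = h₀(ỹ(x)) − V(x)/μ` satisfies the CBF inequality at `x`. -/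
theorem stmt_0 (n N p m₁ m₂ : ℕ)
    (hn : 1 ≤ n) (hN : 1 ≤ N) (hp : 1 ≤ p) (hm₁ : 1 ≤ m₁) (hm₂ : 1 ≤ m₂)
    (x : EuclideanSpace ℝ (Fin n))
    (ytil : EuclideanSpace ℝ (Fin n) → EuclideanSpace ℝ (Fin N))
    (V : EuclideanSpace ℝ (Fin n) → ℝ)
    (h₀ : EuclideanSpace ℝ (Fin N) → ℝ)
    (hytil : DifferentiableAt ℝ ytil x) (hVd : DifferentiableAt ℝ V x)
    (hh₀ : DifferentiableAt ℝ h₀ (ytil x))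
    (f : EuclideanSpace ℝ (Fin n))
    (g₁ : Matrix (Fin n) (Fin m₁) ℝ) (g₂ : Matrix (Fin n) (Fin m₂) ℝ)
    (A : Matrix (Fin N) (Fin N) ℝ) (B : Matrix (Fin N) (Fin p) ℝ)
    (a khat : EuclideanSpace ℝ (Fin p))
    (G : Matrix (Fin p) (Fin m₁) ℝ) (hG : IsUnit (Gᵀ * G))
    (k₁ : Fin m₁ → ℝ) (hk₁ : k₁ = ((Gᵀ * G)⁻¹ * Gᵀ).mulVec (khat - a))
    (e : EuclideanSpace ℝ (Fin p))
    (he : e = a + (WithLp.equiv 2 (Fin p → ℝ)).symm (G.mulVec k₁) - khat)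
    (γ ε β lam μ : ℝ)
    (hγ : 0 < γ) (hε : 0 < ε) (hβ : 0 < β) (hlam : 0 < lam) (hμ : 0 < μ)
    (hparam : lam ≥ γ + ε * μ / (4 * β))
    -- (i) linear output dynamics from the dual relative degree structure
    (hi : ∀ (u₁ : Fin m₁ → ℝ) (u₂ : Fin m₂ → ℝ),
      fderiv ℝ ytil x (f + (WithLp.equiv 2 (Fin n → ℝ)).symm (g₁.mulVec u₁)
          + (WithLp.equiv 2 (Fin n → ℝ)).symm (g₂.mulVec u₂))
        = (WithLp.equiv 2 (Fin N → ℝ)).symm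
            (A.mulVec (ytil x) + B.mulVec (a + (WithLp.equiv 2 (Fin p → ℝ)).symm (G.mulVec u₁))))
    -- the vector `w` whose j-th component is `Dh₀(ỹ(x))` of the j-th column of B
    (w : EuclideanSpace ℝ (Fin p))
    (hw : w = (WithLp.equiv 2 (Fin p → ℝ)).symm
      (fun j => fderiv ℝ h₀ (ytil x) ((WithLp.equiv 2 (Fin N → ℝ)).symm (fun i => B i j))))
    -- (ii) the ISSf-CBF condition for `k̂` on the linear output dynamics
    (hii : fderiv ℝ h₀ (ytil x)
        ((WithLp.equiv 2 (Fin N → ℝ)).symm (A.mulVec (ytil x) + B.mulVec khat))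
      > -γ * h₀ (ytil x) + (1 / ε) * ‖w‖ ^ 2)
    -- (iii) lower bound of the tracking CLF by the squared tracking error
    (hiii : V x ≥ β * ‖e‖ ^ 2)
    -- (iv) exponential decrease of the tracking CLF along the partial closed loop
    (hiv : ∃ u₂ : Fin m₂ → ℝ,
      fderiv ℝ V x (f + (WithLp.equiv 2 (Fin n → ℝ)).symm (g₁.mulVec k₁)
          + (WithLp.equiv 2 (Fin n → ℝ)).symm (g₂.mulVec u₂)) ≤ -lam * V x) :
    ∃ (u₁ : Fin m₁ → ℝ) (u₂ : Fin m₂ → ℝ),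
      fderiv ℝ (h₀ ∘ ytil) x (f + (WithLp.equiv 2 (Fin n → ℝ)).symm (g₁.mulVec u₁)
          + (WithLp.equiv 2 (Fin n → ℝ)).symm (g₂.mulVec u₂))
        - (1 / μ) * fderiv ℝ V x (f + (WithLp.equiv 2 (Fin n → ℝ)).symm (g₁.mulVec u₁)
          + (WithLp.equiv 2 (Fin n → ℝ)).symm (g₂.mulVec u₂))
        > -γ * (h₀ (ytil x) - V x / μ) := by
  obtain ⟨u₂, hu₂⟩ := hiv
  refine ⟨k₁, u₂, ?_⟩
  set v := f + (WithLp.equiv 2 (Fin n → ℝ)).symm (g₁.mulVec k₁)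
      + (WithLp.equiv 2 (Fin n → ℝ)).symm (g₂.mulVec u₂) with hv
  set L := fderiv ℝ h₀ (ytil x) with hL
  have hcomp : fderiv ℝ (h₀ ∘ ytil) x v = L (fderiv ℝ ytil x v) := by
    rw [fderiv_comp x hh₀ hytil]; rfl
  have hBsplit : A.mulVec (ytil x) + B.mulVec (a + (WithLp.equiv 2 (Fin p → ℝ)).symm (G.mulVec k₁))
      = (A.mulVec (ytil x) + B.mulVec khat) + B.mulVec e := by
    subst he
    funext i
    simp [Matrix.mulVec, dotProduct, WithLp.equiv, mul_add, mul_sub, Finset.sum_add_distrib,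
      Finset.sum_sub_distrib]
  have hsymm_add : ∀ (y z : Fin N → ℝ), (WithLp.equiv 2 (Fin N → ℝ)).symm (y + z)
      = (WithLp.equiv 2 (Fin N → ℝ)).symm y + (WithLp.equiv 2 (Fin N → ℝ)).symm z := fun _ _ => rfl
  have hsum : (WithLp.equiv 2 (Fin N → ℝ)).symm (B.mulVec e)
      = ∑ j, e j • (WithLp.equiv 2 (Fin N → ℝ)).symm (fun i => B i j) := by
    have hpi : B.mulVec e = ∑ j, e j • (fun i => B i j) := by
      funext i
      simp [Matrix.mulVec, dotProduct, Finset.sum_apply, mul_comm]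
    calc (WithLp.equiv 2 (Fin N → ℝ)).symm (B.mulVec e)
        = (WithLp.equiv 2 (Fin N → ℝ)).symm (∑ j, e j • (fun i => B i j)) := by rw [hpi]
      _ = ∑ j, e j • (WithLp.equiv 2 (Fin N → ℝ)).symm (fun i => B i j) := by
          ext i; simp [Finset.sum_apply]
  have hip : L ((WithLp.equiv 2 (Fin N → ℝ)).symm (B.mulVec e)) = (inner ℝ w e : ℝ) := by
    rw [hsum, map_sum, hw, PiLp.inner_apply]
    simp [mul_comm]
  have hipge : L ((WithLp.equiv 2 (Fin N → ℝ)).symm (B.mulVec e)) ≥ -(‖w‖ * ‖e‖) := by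
    rw [hip]
    have := abs_real_inner_le_norm w e
    have := abs_le.mp this
    linarith [this.1]
  have hmain : fderiv ℝ (h₀ ∘ ytil) x v
      = L ((WithLp.equiv 2 (Fin N → ℝ)).symm (A.mulVec (ytil x) + B.mulVec khat))
        + L ((WithLp.equiv 2 (Fin N → ℝ)).symm (B.mulVec e)) := by
    rw [hcomp, hi k₁ u₂, hBsplit, hsymm_add, map_add]
  have hEnn : (0:ℝ) ≤ ‖e‖ := norm_nonneg _
  have hWnn : (0:ℝ) ≤ ‖w‖ := norm_nonneg _
  have hV0 : 0 ≤ V x := by nlinarith [sq_nonneg ‖e‖]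
  rw [hmain]
  have h4β : (0:ℝ) < 4 * β := by positivity
  have hparam' : ε * μ ≤ (lam - γ) * (4 * β) := by
    have h := (div_le_iff₀ h4β).mp (by linarith : ε * μ / (4 * β) ≤ lam - γ)
    linarith
  have h1 : ε / (4 * β) ≤ (lam - γ) / μ := by
    rw [div_le_div_iff₀ h4β hμ]; linarith
  have h2 : ε / 4 * ‖e‖ ^ 2 ≤ (lam - γ) / μ * V x := by
    have hc : (0:ℝ) ≤ (lam - γ) / μ := le_trans (by positivity) h1
    calc ε / 4 * ‖e‖ ^ 2 = ε / (4 * β) * (β * ‖e‖ ^ 2) := by field_simp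
      _ ≤ (lam - γ) / μ * (β * ‖e‖ ^ 2) := mul_le_mul_of_nonneg_right h1 (by positivity)
      _ ≤ (lam - γ) / μ * V x := mul_le_mul_of_nonneg_left hiii hc
  have hkey2 : ‖w‖ * ‖e‖ ≤ 1 / ε * ‖w‖ ^ 2 + ε / 4 * ‖e‖ ^ 2 := by
    have h2' : ‖w‖ * ‖e‖ ≤ (‖w‖ ^ 2 + ε ^ 2 / 4 * ‖e‖ ^ 2) / ε :=
      (le_div_iff₀ hε).mpr (by nlinarith [sq_nonneg (‖w‖ - ε / 2 * ‖e‖)])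
    calc ‖w‖ * ‖e‖ ≤ (‖w‖ ^ 2 + ε ^ 2 / 4 * ‖e‖ ^ 2) / ε := h2'
      _ = 1 / ε * ‖w‖ ^ 2 + ε / 4 * ‖e‖ ^ 2 := by field_simp
  have hkey : 1 / ε * ‖w‖ ^ 2 - ‖w‖ * ‖e‖ + (lam - γ) / μ * V x ≥ 0 := by linarith
  have hDV : -(1 / μ) * fderiv ℝ V x v ≥ lam / μ * V x := by
    have h' := mul_le_mul_of_nonneg_left hu₂ (le_of_lt (by positivity : (0:ℝ) < 1 / μ))
    have heq : 1 / μ * (-lam * V x) = -(lam / μ * V x) := by ring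
    linarith
  have hfin : -γ * (h₀ (ytil x) - V x / μ) = -γ * h₀ (ytil x) + γ / μ * V x := by ring
  have hsplit : lam / μ * V x - γ / μ * V x = (lam - γ) / μ * V x := by ring
  linarith [hii, hipge, hDV, hkey]
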